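/- Let q ≥ 2, let k ≥ 1 be an integer, and let g ∈ H¹ with r^{q−1}g ∈ L² be localized to the angular frequency band k. Then for every σ > 0, σ^{1/q} ‖r^{q−2} g‖² ≤ σ ‖∇g‖² + 2 ‖r^{q−1} g‖². -/

import Mathlib

open MeasureTheory Real Set

noncomputable section

/-- Integration domain `(0,∞) × (0,2π]` in the `(r,θ)` plane. -/
def domRT : Set (ℝ × ℝ) := (Set.Ioi (0:ℝ)) ×ˢ (Set.Ioc (0:ℝ) (2*π))

/-- Squared `L²` norm with respect to the measure `r dr dθ`. -/
def nrm2 (g : ℝ → ℝ → ℝ) : ℝ := ∫ p in domRT, (g p.1 p.2)^2 * p.1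

/-- Inner product with respect to the measure `r dr dθ`. -/
def inr2 (g h : ℝ → ℝ → ℝ) : ℝ := ∫ p in domRT, g p.1 p.2 * h p.1 p.2 * p.1

/-- Radial partial derivative. -/
def pdr (g : ℝ → ℝ → ℝ) : ℝ → ℝ → ℝ := fun r θ => deriv (fun x => g x θ) r

/-- Angular partial derivative. -/
def pdt (g : ℝ → ℝ → ℝ) : ℝ → ℝ → ℝ := fun r θ => deriv (fun x => g r x) θ

/-- Squared `L²` norm of the polar gradient `∇g = (∂_r g, r⁻¹ ∂_θ g)`. -/
def gnrm2 (g : ℝ → ℝ → ℝ) : ℝ := nrm2 (pdr g) + nrm2 (fun r θ => pdt g r θ / r)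

/-- Polar Laplacian `Δg = ∂_rr g + r⁻¹ ∂_r g + r⁻² ∂_θθ g`. -/
def plap (g : ℝ → ℝ → ℝ) : ℝ → ℝ → ℝ :=
  fun r θ => pdr (pdr g) r θ + pdr g r θ / r + pdt (pdt g) r θ / r^2

/-- Scalar inequality: `σ^{1/q} r^{2(q-2)} ≤ σ/r² + 2 r^{2(q-1)}`. -/
lemma scalar_aux (q σ r : ℝ) (hq : 2 ≤ q) (hσ : 0 < σ) (hr : 0 < r) :
    σ ^ (1/q) * (r ^ (q-2))^2 ≤ σ * (1/r)^2 + 2 * (r ^ (q-1))^2 := by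
  have hq0 : (0:ℝ) < q := by linarith
  set R : ℝ := σ ^ (1/(2*q)) with hRdef
  have hR : 0 < R := Real.rpow_pos_of_pos hσ _
  have hru : r ^ (q-1) = r ^ (q-2) * r := by
    rw [show q - 1 = (q-2) + 1 by ring, Real.rpow_add_one hr.ne']
  rcases le_or_gt r R with h | h
  · -- r ≤ R
    have h1 : r ^ (q-1) ≤ R ^ (q-1) := Real.rpow_le_rpow hr.le h (by linarith)
    have hRq : R ^ (q-1) = σ ^ ((q-1)/(2*q)) := by
      rw [hRdef, ← Real.rpow_mul hσ.le]
      congr 1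
      ring
    have h2 : σ ^ (1/q) * (R ^ (q-1))^2 = σ := by
      rw [hRq, sq, ← Real.rpow_add hσ, ← Real.rpow_add hσ]
      rw [show 1/q + ((q-1)/(2*q) + (q-1)/(2*q)) = 1 by field_simp; ring]
      exact Real.rpow_one σ
    have hnum : σ ^ (1/q) * (r ^ (q-1))^2 ≤ σ ^ (1/q) * (R ^ (q-1))^2 := by
      have := pow_le_pow_left₀ (Real.rpow_nonneg hr.le _) h1 2
      exact mul_le_mul_of_nonneg_left this (Real.rpow_nonneg hσ.le _)
    calc σ ^ (1/q) * (r ^ (q-2))^2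
        = (σ ^ (1/q) * (r ^ (q-1))^2) / r^2 := by
          rw [hru]; field_simp
      _ ≤ (σ ^ (1/q) * (R ^ (q-1))^2) / r^2 := by
          apply div_le_div_of_nonneg_right hnum (by positivity) |>.trans_eq rfl
      _ = σ * (1/r)^2 := by rw [h2]; field_simp
      _ ≤ σ * (1/r)^2 + 2 * (r ^ (q-1))^2 := le_add_of_nonneg_right (by positivity)
  · -- R < r
    have hR2 : σ ^ (1/q) * (1/R)^2 = 1 := by
      have hRsq : R^2 = σ ^ (1/q) := by
        rw [hRdef, sq, ← Real.rpow_add hσ,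
          show 1/(2*q) + 1/(2*q) = 1/q by ring]
      rw [div_pow, one_pow, hRsq]
      field_simp
    have hmono : (1/r)^2 ≤ (1/R)^2 := by
      apply pow_le_pow_left₀ (by positivity)
      exact one_div_le_one_div_of_le hR h.le
    calc σ ^ (1/q) * (r ^ (q-2))^2
        = σ ^ (1/q) * (1/r)^2 * (r ^ (q-1))^2 := by
          rw [hru]; field_simp
      _ ≤ σ ^ (1/q) * (1/R)^2 * (r ^ (q-1))^2 := by
          apply mul_le_mul_of_nonneg_right _ (by positivity)
          exact mul_le_mul_of_nonneg_left hmono (Real.rpow_nonneg hσ.le _)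
      _ = (r ^ (q-1))^2 := by rw [hR2]; ring
      _ ≤ σ * (1/r)^2 + 2 * (r ^ (q-1))^2 := by nlinarith [sq_nonneg (r^(q-1)), sq_nonneg (1/r), hσ.le, mul_nonneg hσ.le (sq_nonneg (1/r))]

set_option maxHeartbeats 1000000 in
/-- Weighted inequality in the case `q ≥ 2`: for `g ∈ H¹` with `r^{q−1}g ∈ L²`
localized to an angular frequency band `k ≥ 1` and every `σ > 0`,
`σ^{1/q} ‖r^{q−2}g‖² ≤ σ‖∇g‖² + 2‖r^{q−1}g‖²`. -/
theorem weighted_origin_inequality_q_ge_two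
    (q : ℝ) (hq : 2 ≤ q) (k : ℕ) (hk : 1 ≤ k)
    (g : ℝ → ℝ → ℝ)
    (hsm : ContDiff ℝ 1 (fun p : ℝ × ℝ => g p.1 p.2))
    (hband : ∃ a b : ℝ → ℝ, ∀ r θ,
      g r θ = a r * Real.cos (k * θ) + b r * Real.sin (k * θ))
    (hL2 : IntegrableOn (fun p : ℝ × ℝ => (g p.1 p.2)^2 * p.1) domRT)
    (hH1r : IntegrableOn (fun p : ℝ × ℝ => (pdr g p.1 p.2)^2 * p.1) domRT)
    (hH1t : IntegrableOn (fun p : ℝ × ℝ => (pdt g p.1 p.2 / p.1)^2 * p.1) domRT)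
    (hwL2 : IntegrableOn (fun p : ℝ × ℝ => (p.1 ^ (q-1) * g p.1 p.2)^2 * p.1) domRT)
    (σ : ℝ) (hσ : 0 < σ) :
    σ ^ (1/q) * nrm2 (fun r θ => r ^ (q-2) * g r θ) ≤
      σ * gnrm2 g + 2 * nrm2 (fun r θ => r ^ (q-1) * g r θ) := by
  obtain ⟨a, b, hab⟩ := hband
  have hπ : 0 < π := Real.pi_pos
  have hk1 : (1:ℝ) ≤ (k:ℝ) := by exact_mod_cast hk
  have hk0 : (k:ℝ) ≠ 0 := by positivity
  set c : ℝ := π / (2*(k:ℝ)) with hcdef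
  have hc0 : 0 < c := by positivity
  have hkc : (k:ℝ) * c = π/2 := by rw [hcdef]; field_simp
  have hc2π : c ≤ 2*π := by
    rw [hcdef, div_le_iff₀ (by positivity)]
    nlinarith
  -- periodicity of g in θ
  have hper : ∀ r θ, g r (θ + 2*π) = g r θ := by
    intro r θ
    rw [hab r (θ + 2*π), hab r θ, show (k:ℝ)*(θ+2*π) = (k:ℝ)*θ + (k:ℕ)*(2*π) by push_cast; ring,
      Real.cos_add_nat_mul_two_pi, Real.sin_add_nat_mul_two_pi]
  -- the angular derivative is a shift of g
  have hpdt : ∀ r θ, pdt g r θ = (k:ℝ) * g r (θ + c) := by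
    intro r θ
    have h1 : (fun x => g r x) = fun x => a r * Real.cos ((k:ℝ)*x) + b r * Real.sin ((k:ℝ)*x) :=
      funext (hab r)
    have hkx : HasDerivAt (fun x : ℝ => (k:ℝ)*x) (k:ℝ) θ := by
      simpa using (hasDerivAt_id θ).const_mul (k:ℝ)
    have hD : HasDerivAt (fun x => g r x)
        (a r * (-Real.sin ((k:ℝ)*θ) * k) + b r * (Real.cos ((k:ℝ)*θ) * k)) θ := by
      rw [h1]
      exact (hkx.cos.const_mul (a r)).add (hkx.sin.const_mul (b r))
    show deriv (fun x => g r x) θ = _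
    rw [hD.deriv, hab r (θ + c), show (k:ℝ)*(θ+c) = (k:ℝ)*θ + π/2 by rw [mul_add, hkc],
      Real.cos_add_pi_div_two, Real.sin_add_pi_div_two]
    ring
  -- the auxiliary function G = k² (g/r)² r
  set G : ℝ × ℝ → ℝ := fun p => ((k:ℝ) * g p.1 p.2 / p.1)^2 * p.1 with hGdef
  have hcomp : ∀ p : ℝ × ℝ, (pdt g p.1 p.2 / p.1)^2 * p.1 = G (p + ((0:ℝ), c)) := by
    intro p
    simp only [hGdef, Prod.fst_add, Prod.snd_add, add_zero, hpdt p.1 p.2]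
  -- preimage computation
  have hpre : ∀ (e u v : ℝ), (fun p : ℝ × ℝ => p + ((0:ℝ), e)) ⁻¹' (Ioi (0:ℝ) ×ˢ Ioc u v)
      = Ioi (0:ℝ) ×ˢ Ioc (u - e) (v - e) := by
    intro e u v
    ext p
    simp only [Set.mem_preimage, Set.mem_prod, Set.mem_Ioi, Set.mem_Ioc, Prod.fst_add,
      Prod.snd_add, add_zero]
    constructor <;> rintro ⟨h1, h2, h3⟩ <;> exact ⟨by linarith, by linarith, by linarith⟩
  have hmp : ∀ e : ℝ, MeasurePreserving (fun p : ℝ × ℝ => p + ((0:ℝ), e)) volume volume :=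
    fun e => measurePreserving_add_right volume ((0:ℝ), e)
  have hemb : ∀ e : ℝ, MeasurableEmbedding (fun p : ℝ × ℝ => p + ((0:ℝ), e)) :=
    fun e => (MeasurableEquiv.addRight ((0:ℝ), e)).measurableEmbedding
  -- transfer to the shifted set S
  set S : Set (ℝ × ℝ) := Ioi (0:ℝ) ×ˢ Ioc c (2*π + c) with hSdef
  have hpreS : (fun p : ℝ × ℝ => p + ((0:ℝ), c)) ⁻¹' S = domRT := by
    rw [hSdef, hpre]
    rw [show c - c = 0 by ring, show 2*π + c - c = 2*π by ring]
    rfl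
  have hH1t' : IntegrableOn (G ∘ (fun p : ℝ × ℝ => p + ((0:ℝ), c))) domRT := by
    have : (fun p : ℝ × ℝ => (pdt g p.1 p.2 / p.1)^2 * p.1)
        = G ∘ (fun p : ℝ × ℝ => p + ((0:ℝ), c)) := funext fun p => hcomp p
    rw [← this]; exact hH1t
  have hGS : IntegrableOn G S := by
    rw [← (hmp c).integrableOn_comp_preimage (hemb c), hpreS]
    exact hH1t'
  have hintS : ∫ p in domRT, (pdt g p.1 p.2 / p.1)^2 * p.1 = ∫ p in S, G p := by
    rw [show (fun p : ℝ × ℝ => (pdt g p.1 p.2 / p.1)^2 * p.1)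
        = fun p : ℝ × ℝ => G (p + ((0:ℝ), c)) from funext fun p => hcomp p]
    rw [← hpreS]
    exact (hmp c).setIntegral_preimage_emb (hemb c) G S
  -- periodic shift: segment Ioc 2π (2π+c) comes from Ioc 0 c
  set S2 : Set (ℝ × ℝ) := Ioi (0:ℝ) ×ˢ Ioc (2*π) (2*π + c) with hS2def
  have hpreS2 : (fun p : ℝ × ℝ => p + ((0:ℝ), 2*π)) ⁻¹' S2 = Ioi (0:ℝ) ×ˢ Ioc 0 c := by
    rw [hS2def, hpre]
    rw [show 2*π - 2*π = 0 by ring, show 2*π + c - 2*π = c by ring]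
  have hGper : (G ∘ (fun p : ℝ × ℝ => p + ((0:ℝ), 2*π))) = G := by
    funext p
    simp only [Function.comp_apply, hGdef, Prod.fst_add, Prod.snd_add, add_zero, hper p.1 p.2]
  have hS2S : S2 ⊆ S := by
    rw [hS2def, hSdef]
    apply Set.prod_mono_right
    exact Set.Ioc_subset_Ioc hc2π le_rfl
  have hGS2 : IntegrableOn G S2 := hGS.mono_set hS2S
  have hG0c : IntegrableOn G (Ioi (0:ℝ) ×ˢ Ioc 0 c) := by
    rw [← hpreS2, ← hGper]
    exact ((hmp (2*π)).integrableOn_comp_preimage (hemb (2*π))).mpr (hGper ▸ hGS2)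
  have hint0c : ∫ p in Ioi (0:ℝ) ×ˢ Ioc 0 c, G p = ∫ p in S2, G p := by
    conv_lhs => rw [← hpreS2, ← hGper]
    exact (hmp (2*π)).setIntegral_preimage_emb (hemb (2*π)) G S2
  -- split domRT and S
  have hGSc2π : IntegrableOn G (Ioi (0:ℝ) ×ˢ Ioc c (2*π)) := by
    apply hGS.mono_set
    apply Set.prod_mono_right
    exact Set.Ioc_subset_Ioc le_rfl (by linarith)
  have hdomsplit : domRT = (Ioi (0:ℝ) ×ˢ Ioc 0 c) ∪ (Ioi (0:ℝ) ×ˢ Ioc c (2*π)) := by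
    rw [← Set.prod_union, Set.Ioc_union_Ioc_eq_Ioc hc0.le hc2π]
    rfl
  have hSsplit : S = (Ioi (0:ℝ) ×ˢ Ioc c (2*π)) ∪ S2 := by
    rw [hS2def, hSdef, ← Set.prod_union, Set.Ioc_union_Ioc_eq_Ioc hc2π (by linarith)]
  have hdisj : ∀ u v w : ℝ, Disjoint (Ioi (0:ℝ) ×ˢ Ioc u v) (Ioi (0:ℝ) ×ˢ Ioc v w) := by
    intro u v w
    rw [Set.disjoint_left]
    intro p hp hp'
    exact absurd hp.2.2 (not_le.mpr hp'.2.1)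
  have hmeas : ∀ u v : ℝ, MeasurableSet (Ioi (0:ℝ) ×ˢ Ioc u v) :=
    fun u v => measurableSet_Ioi.prod measurableSet_Ioc
  have hGdom : IntegrableOn G domRT := by
    rw [hdomsplit]
    exact hG0c.union hGSc2π
  have hGeq : ∫ p in domRT, G p = ∫ p in domRT, (pdt g p.1 p.2 / p.1)^2 * p.1 := by
    rw [hintS, hdomsplit, hSsplit]
    rw [setIntegral_union (hdisj 0 c (2*π)) (hmeas c (2*π)) hG0c hGSc2π]
    rw [setIntegral_union (hdisj c (2*π) (2*π+c)) (hmeas (2*π) (2*π+c)) hGSc2π hGS2]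
    rw [hint0c]
    ring
  -- pointwise inequality on domRT
  have hmeasdom : MeasurableSet domRT := hmeas 0 (2*π)
  have key : ∀ p ∈ domRT, σ ^ (1/q) * ((p.1 ^ (q-2) * g p.1 p.2)^2 * p.1)
      ≤ σ * G p + 2 * ((p.1 ^ (q-1) * g p.1 p.2)^2 * p.1) := by
    intro p hp
    have hr : 0 < p.1 := hp.1
    have hs := scalar_aux q σ p.1 hq hσ hr
    set A : ℝ := g p.1 p.2 with hA
    have hA2 : (0:ℝ) ≤ A^2 * p.1 := by positivity
    have hmul := mul_le_mul_of_nonneg_right hs hA2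
    have hGlb : σ * ((1/p.1)^2 * (A^2 * p.1)) ≤ σ * G p := by
      have hGval : G p = (k:ℝ)^2 * ((1/p.1)^2 * (A^2 * p.1)) := by
        rw [hGdef]
        field_simp
        ring
      rw [hGval]
      have hX : (0:ℝ) ≤ (1/p.1)^2 * (A^2 * p.1) := by positivity
      have hk2 : (1:ℝ) ≤ (k:ℝ)^2 := by nlinarith
      exact mul_le_mul_of_nonneg_left (le_mul_of_one_le_left hX hk2) hσ.le
    calc σ ^ (1/q) * ((p.1 ^ (q-2) * A)^2 * p.1)
        = σ ^ (1/q) * (p.1 ^ (q-2))^2 * (A^2 * p.1) := by ring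
      _ ≤ (σ * (1/p.1)^2 + 2 * (p.1 ^ (q-1))^2) * (A^2 * p.1) := hmul
      _ = σ * ((1/p.1)^2 * (A^2 * p.1)) + 2 * ((p.1 ^ (q-1) * A)^2 * p.1) := by ring
      _ ≤ σ * G p + 2 * ((p.1 ^ (q-1) * A)^2 * p.1) := by linarith [hGlb]
  -- assemble
  have hintGσ : IntegrableOn (fun p : ℝ × ℝ => σ * G p) domRT := hGdom.const_mul σ
  have hintW2 : IntegrableOn
      (fun p : ℝ × ℝ => 2 * ((p.1 ^ (q-1) * g p.1 p.2)^2 * p.1)) domRT := hwL2.const_mul 2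
  have step1 : σ ^ (1/q) * nrm2 (fun r θ => r ^ (q-2) * g r θ)
      = ∫ p in domRT, σ ^ (1/q) * ((p.1 ^ (q-2) * g p.1 p.2)^2 * p.1) := by
    rw [nrm2, integral_const_mul]
  have step2 : (∫ p in domRT, σ ^ (1/q) * ((p.1 ^ (q-2) * g p.1 p.2)^2 * p.1))
      ≤ ∫ p in domRT, (σ * G p + 2 * ((p.1 ^ (q-1) * g p.1 p.2)^2 * p.1)) := by
    apply integral_mono_of_nonneg
    · filter_upwards [self_mem_ae_restrict hmeasdom] with p hp
      have hr : 0 < p.1 := hp.1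
      positivity
    · exact hintGσ.add hintW2
    · filter_upwards [self_mem_ae_restrict hmeasdom] with p hp
      exact key p hp
  have step3 : (∫ p in domRT, (σ * G p + 2 * ((p.1 ^ (q-1) * g p.1 p.2)^2 * p.1)))
      = σ * (∫ p in domRT, (pdt g p.1 p.2 / p.1)^2 * p.1)
        + 2 * nrm2 (fun r θ => r ^ (q-1) * g r θ) := by
    rw [integral_add hintGσ hintW2, integral_const_mul, integral_const_mul, hGeq, nrm2]
  have hpdrnn : 0 ≤ nrm2 (pdr g) := by
    apply setIntegral_nonneg hmeasdom
    intro p hp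
    have hr : 0 < p.1 := hp.1
    positivity
  have hfin : σ * (∫ p in domRT, (pdt g p.1 p.2 / p.1)^2 * p.1) ≤ σ * gnrm2 g := by
    have : (∫ p in domRT, (pdt g p.1 p.2 / p.1)^2 * p.1)
        = nrm2 (fun r θ => pdt g r θ / r) := rfl
    rw [this, gnrm2]
    nlinarith [hpdrnn, hσ.le]
  calc σ ^ (1/q) * nrm2 (fun r θ => r ^ (q-2) * g r θ)
      = ∫ p in domRT, σ ^ (1/q) * ((p.1 ^ (q-2) * g p.1 p.2)^2 * p.1) := step1
    _ ≤ ∫ p in domRT, (σ * G p + 2 * ((p.1 ^ (q-1) * g p.1 p.2)^2 * p.1)) := step2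
    _ = σ * (∫ p in domRT, (pdt g p.1 p.2 / p.1)^2 * p.1)
        + 2 * nrm2 (fun r θ => r ^ (q-1) * g r θ) := step3
    _ ≤ σ * gnrm2 g + 2 * nrm2 (fun r θ => r ^ (q-1) * g r θ) := by linarith [hfin]
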